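/- arXiv:1707.08744 — 7 statements merged into one kernel-verified Lean document; each statement's English description precedes it below -/
import Mathlib

section
/- Let (W, ∼, N, V) be a conditional neighbourhood model* and let a be an agent. Define the relation R_a ⊆ W × W by: w R_a v iff for all X ⊆ W, N_a^w(X) = N_a^v(X). Then ∼_a = R_a, and consequently (W, N, V) satisfies the defining conditions of a conditional neighbourhood model with the classes [w]_a := {v ∈ W | ∀ X ⊆ W, N_a^w(X) = N_a^v(X)}. -/
/-- The knowledge cell of agent `a` at world `w`, derived from the
conditional neighbourhood function `N`:
`[w]_a = {v | ∀ X ⊆ W, N_a^w(X) = N_a^v(X)}`. -/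
def cellOf {Agt W : Type} (N : Agt → W → Set W → Set (Set W)) (a : Agt) (w : W) : Set W :=
  {v | ∀ X : Set W, N a w X = N a v X}

/-- A conditional neighbourhood model `(W, N, V)`. -/
structure CNModel (Agt Prp W : Type) : Type where
  nonempty : Nonempty W
  N : Agt → W → Set W → Set (Set W)
  V : Prp → Set W
  cond_c : ∀ a w X, ∀ Y ∈ N a w X, Y ⊆ X ∩ cellOf N a w
  cond_ec : ∀ a w (X Y : Set W), X ∩ cellOf N a w = Y ∩ cellOf N a w → N a w X = N a w Y
  cond_d : ∀ a w X, ∀ Y ∈ N a w X, (X ∩ cellOf N a w) \ Y ∉ N a w X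
  cond_sc : ∀ a w (X Y Z : Set W), Y ⊆ X ∩ cellOf N a w → Z ⊆ X ∩ cellOf N a w →
      (X ∩ cellOf N a w) \ Y ∉ N a w X → Y ⊂ Z → Z ∈ N a w X

/-- A conditional neighbourhood model* `(W, ∼, N, V)`: the epistemic
equivalence relations `∼_a` are primitive, and `N` satisfies (c), (a), (d),
(sc), (ec) with respect to the `∼_a`-classes `[w]_a = {v | w ∼_a v}`. -/
structure CNModelStar (Agt Prp W : Type) : Type where
  nonempty : Nonempty W
  sim : Agt → W → W → Prop
  equiv : ∀ a, Equivalence (sim a)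
  N : Agt → W → Set W → Set (Set W)
  V : Prp → Set W
  cond_c : ∀ a w X, ∀ Y ∈ N a w X, Y ⊆ X ∩ {v | sim a w v}
  cond_a : ∀ a w X, ∀ v, sim a w v → N a w X = N a v X
  cond_d : ∀ a w X, ∀ Y ∈ N a w X, (X ∩ {v | sim a w v}) \ Y ∉ N a w X
  cond_sc : ∀ a w (X Y Z : Set W), Y ⊆ X ∩ {v | sim a w v} → Z ⊆ X ∩ {v | sim a w v} →
      (X ∩ {v | sim a w v}) \ Y ∉ N a w X → Y ⊂ Z → Z ∈ N a w X
  cond_ec : ∀ a w (X Y : Set W), X ∩ {v | sim a w v} = Y ∩ {v | sim a w v} →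
      N a w X = N a w Y

/-- In a conditional neighbourhood model* the primitive equivalence `∼_a`
coincides with the relation `R_a` defined by `w R_a v iff ∀ X, N_a^w(X) = N_a^v(X)`,
and consequently `(W, N, V)` is a conditional neighbourhood model (whose cells
`[w]_a` are defined from `N`). -/
theorem star_eq_derived {Agt Prp W : Type} (M : CNModelStar Agt Prp W) :
    (∀ (a : Agt) (w v : W), M.sim a w v ↔ ∀ X : Set W, M.N a w X = M.N a v X) ∧
    ∃ M' : CNModel Agt Prp W, M'.N = M.N ∧ M'.V = M.V := by
  -- the cell itself is a neighbourhood of itself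
  have cell_mem : ∀ (a : Agt) (w : W),
      {v | M.sim a w v} ∈ M.N a w {v | M.sim a w v} := by
    intro a w
    by_contra h
    set S : Set W := {v | M.sim a w v} with hS
    have hw : w ∈ S := (M.equiv a).refl w
    have h' : (S ∩ S) \ (∅ : Set W) ∉ M.N a w S := by
      simpa [Set.inter_self, Set.diff_empty] using h
    have := M.cond_sc a w S ∅ S (by simp) (fun x hx => ⟨hx, hx⟩)
      h' (by exact ⟨Set.empty_subset S, fun hsub => (hsub hw).elim⟩)
    exact h this
  have main : ∀ (a : Agt) (w v : W),
      M.sim a w v ↔ ∀ X : Set W, M.N a w X = M.N a v X := by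
    intro a w v
    constructor
    · intro h X; exact M.cond_a a w X v h
    · intro h
      have hm : {u | M.sim a w u} ∈ M.N a v {u | M.sim a w u} := by
        rw [← h]; exact cell_mem a w
      have := M.cond_c a v _ _ hm ((M.equiv a).refl w)
      exact (M.equiv a).symm this.2
  have cellEq : ∀ (a : Agt) (w : W), cellOf M.N a w = {v | M.sim a w v} := by
    intro a w
    ext v
    exact ((main a w v).symm)
  refine ⟨main, ⟨{
    nonempty := M.nonempty
    N := M.N
    V := M.V
    cond_c := by intro a w X; rw [cellEq]; exact M.cond_c a w X
    cond_ec := by intro a w X Y; rw [cellEq]; exact M.cond_ec a w X Y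
    cond_d := by intro a w X; rw [cellEq]; exact M.cond_d a w X
    cond_sc := by intro a w X Y Z; rw [cellEq]; exact M.cond_sc a w X Y Z
  }, rfl, rfl⟩⟩
end

section
/- Let M = (W, N, V) be a conditional neighbourhood model. Then for every agent a, world w ∈ W, and sets X, S ⊆ W: there exists Y ∈ N_a^w(X) with Y ⊆ S if and only if S ∩ X ∩ [w]_a ∈ N_a^w(X). In particular, M,w ⊨ B_a(φ,ψ) iff {v ∈ ⟦φ⟧_M ∩ [w]_a | M,v ⊨ ψ} ∈ N_a^w(⟦φ⟧_M). -/
/-- The language L_CN: `φ ::= ⊤ | p | ¬φ | (φ∧φ) | B_a(φ,φ)`. -/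
inductive CNForm (Agt Prp : Type) : Type
  | top : CNForm Agt Prp
  | atom : Prp → CNForm Agt Prp
  | neg : CNForm Agt Prp → CNForm Agt Prp
  | and : CNForm Agt Prp → CNForm Agt Prp → CNForm Agt Prp
  | bel : Agt → CNForm Agt Prp → CNForm Agt Prp → CNForm Agt Prp

/-- Truth of an L_CN formula at a world of a conditional neighbourhood model.
`B_a(φ,ψ)` holds at `w` iff some `Y ∈ N_a^w(⟦φ⟧)` satisfies `Y ⊆ ⟦ψ⟧`. -/
def CNModel.truth {Agt Prp W : Type} (M : CNModel Agt Prp W) : CNForm Agt Prp → W → Prop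
  | .top, _ => True
  | .atom p, w => w ∈ M.V p
  | .neg φ, w => ¬ M.truth φ w
  | .and φ ψ, w => M.truth φ w ∧ M.truth ψ w
  | .bel a φ ψ, w => ∃ Y ∈ M.N a w {v | M.truth φ v}, Y ⊆ {v | M.truth ψ v}

/-- (i) `∃ Y ∈ N_a^w(X), Y ⊆ S` iff `S ∩ X ∩ [w]_a ∈ N_a^w(X)`;
(ii) in particular, `M,w ⊨ B_a(φ,ψ)` iff `{v ∈ ⟦φ⟧ ∩ [w]_a | M,v ⊨ ψ} ∈ N_a^w(⟦φ⟧)`. -/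
theorem cn_bel_characterization {Agt Prp W : Type} (M : CNModel Agt Prp W)
    (a : Agt) (w : W) :
    (∀ X S : Set W, (∃ Y ∈ M.N a w X, Y ⊆ S) ↔ S ∩ X ∩ cellOf M.N a w ∈ M.N a w X) ∧
    (∀ φ ψ : CNForm Agt Prp,
      M.truth (.bel a φ ψ) w ↔
        {v | (v ∈ {u | M.truth φ u} ∩ cellOf M.N a w) ∧ M.truth ψ v}
          ∈ M.N a w {v | M.truth φ v}) := by
  have main : ∀ X S : Set W,
      (∃ Y ∈ M.N a w X, Y ⊆ S) ↔ S ∩ X ∩ cellOf M.N a w ∈ M.N a w X := by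
    intro X S
    constructor
    · rintro ⟨Y, hY, hYS⟩
      have hYC : Y ⊆ X ∩ cellOf M.N a w := M.cond_c a w X Y hY
      have hsub : Y ⊆ S ∩ X ∩ cellOf M.N a w := by
        intro v hv
        exact ⟨⟨hYS hv, (hYC hv).1⟩, (hYC hv).2⟩
      rcases eq_or_ssubset_of_subset hsub with h | h
      · exact h ▸ hY
      · exact M.cond_sc a w X Y _ hYC
          (by intro v hv; exact ⟨hv.1.2, hv.2⟩)
          (M.cond_d a w X Y hY) h
    · intro h
      exact ⟨_, h, fun v hv => hv.1.1⟩
  refine ⟨main, fun φ ψ => ?_⟩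
  have := main {v | M.truth φ v} {v | M.truth ψ v}
  have hset : {v | (v ∈ {u | M.truth φ u} ∩ cellOf M.N a w) ∧ M.truth ψ v}
      = {v | M.truth ψ v} ∩ {v | M.truth φ v} ∩ cellOf M.N a w := by
    ext v; simp only [Set.mem_inter_iff, Set.mem_setOf_eq]; tauto
  rw [hset]
  exact this
end

section
/- Soundness of the CN calculus for conditional neighbourhood models: every formula φ of L_CN derivable in the CN calculus is true at every world of every conditional neighbourhood model. -/
namespace CNForm

/-- Material implication, defined from `¬` and `∧`. -/
def imp {Agt Prp : Type} (φ ψ : CNForm Agt Prp) : CNForm Agt Prp := .neg (.and φ (.neg ψ))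

/-- Disjunction, defined from `¬` and `∧`. -/
def or {Agt Prp : Type} (φ ψ : CNForm Agt Prp) : CNForm Agt Prp := .neg (.and (.neg φ) (.neg ψ))

/-- Biconditional. -/
def iff {Agt Prp : Type} (φ ψ : CNForm Agt Prp) : CNForm Agt Prp := .and (imp φ ψ) (imp ψ φ)

/-- Knowledge: `K_a φ := ¬B_a(¬φ,⊤)`. -/
def K {Agt Prp : Type} (a : Agt) (φ : CNForm Agt Prp) : CNForm Agt Prp := .neg (.bel a (.neg φ) .top)

end CNForm

/-- Boolean evaluation of a formula under an assignment `v` of truth values to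
the "atomic" formulas (proposition letters and belief formulas), interpreting
`⊤`, `¬`, `∧` classically. -/
def boolEval {Agt Prp : Type} (v : CNForm Agt Prp → Prop) : CNForm Agt Prp → Prop
  | .top => True
  | .atom p => v (.atom p)
  | .neg φ => ¬ boolEval v φ
  | .and φ ψ => boolEval v φ ∧ boolEval v ψ
  | .bel a φ ψ => v (.bel a φ ψ)

/-- `φ` is an instance of a propositional tautology: it evaluates to true under
every assignment of truth values to proposition letters and belief formulas. -/
def CNTaut {Agt Prp : Type} (φ : CNForm Agt Prp) : Prop := ∀ v, boolEval v φ

/-- The CN calculus. -/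
inductive CNDeriv {Agt Prp : Type} : CNForm Agt Prp → Prop
  | taut {φ : CNForm Agt Prp} : CNTaut φ → CNDeriv φ
  | distK (a : Agt) (φ ψ : CNForm Agt Prp) :
      CNDeriv ((CNForm.K a (φ.imp ψ)).imp ((CNForm.K a φ).imp (CNForm.K a ψ)))
  | tAx (a : Agt) (φ : CNForm Agt Prp) : CNDeriv ((CNForm.K a φ).imp φ)
  | fiveB (a : Agt) (φ ψ : CNForm Agt Prp) :
      CNDeriv ((CNForm.bel a φ ψ).imp (CNForm.K a (.bel a φ ψ)))
  | fourB (a : Agt) (φ ψ : CNForm Agt Prp) :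
      CNDeriv ((CNForm.neg (.bel a φ ψ)).imp (CNForm.K a (.neg (.bel a φ ψ))))
  | dAx (a : Agt) (φ ψ : CNForm Agt Prp) :
      CNDeriv ((CNForm.bel a φ ψ).imp (.neg (.bel a φ (.neg ψ))))
  | ecAx (a : Agt) (φ ψ χ : CNForm Agt Prp) :
      CNDeriv ((CNForm.K a (φ.iff ψ)).imp ((CNForm.bel a φ χ).imp (.bel a ψ χ)))
  | mAx (a : Agt) (φ ψ χ : CNForm Agt Prp) :
      CNDeriv ((CNForm.K a (φ.imp ψ)).imp ((CNForm.bel a χ φ).imp (.bel a χ ψ)))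
  | cAx (a : Agt) (φ ψ : CNForm Agt Prp) :
      CNDeriv ((CNForm.bel a φ ψ).imp (.bel a φ (.and φ ψ)))
  | scAx (a : Agt) (φ ψ χ : CNForm Agt Prp) :
      CNDeriv (((CNForm.neg (.bel a χ (.neg φ))).and
          (.neg (CNForm.K a (.neg (χ.and ((CNForm.neg φ).and ψ)))))).imp
        (.bel a χ (φ.or ψ)))
  | mp {φ ψ : CNForm Agt Prp} : CNDeriv (φ.imp ψ) → CNDeriv φ → CNDeriv ψ
  | necK {φ : CNForm Agt Prp} (a : Agt) : CNDeriv φ → CNDeriv (CNForm.K a φ)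

section Aux

variable {Agt Prp W : Type} (M : CNModel Agt Prp W)

lemma mem_cell_self (N : Agt → W → Set W → Set (Set W)) (a : Agt) (w : W) :
    w ∈ cellOf N a w := fun _ => rfl

lemma cell_eqN {a : Agt} {w v : W} (h : v ∈ cellOf M.N a w) (X : Set W) :
    M.N a v X = M.N a w X := (h X).symm

/-- Monotonicity within the cell. -/
lemma N_mono {a : Agt} {w : W} {X Y Z : Set W} (hY : Y ∈ M.N a w X)
    (hYZ : Y ⊆ Z) (hZ : Z ⊆ X ∩ cellOf M.N a w) : Z ∈ M.N a w X := by
  rcases hYZ.ssubset_or_eq with h | h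
  · exact M.cond_sc a w X Y Z (M.cond_c a w X Y hY) hZ (M.cond_d a w X Y hY) h
  · exact h ▸ hY

lemma N_empty_iff (a : Agt) (w : W) (X : Set W) :
    (∀ Y, Y ∉ M.N a w X) ↔ X ∩ cellOf M.N a w = ∅ := by
  constructor
  · intro h
    by_contra hne
    rcases Set.nonempty_iff_ne_empty.2 hne with ⟨v, hv⟩
    exact h _ (M.cond_sc a w X ∅ (X ∩ cellOf M.N a w) (Set.empty_subset _)
      (subset_rfl) (by simpa using h (X ∩ cellOf M.N a w))
      (Set.ssubset_iff_of_subset (Set.empty_subset _) |>.2 ⟨v, hv, by simp⟩))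
  · intro h Y hY
    have hsub := M.cond_c a w X Y hY
    have : Y = ∅ := Set.subset_eq_empty (h ▸ hsub) rfl
    have hd := M.cond_d a w X Y hY
    rw [this] at hY hd
    exact hd (by simpa [h] using hY)

lemma truth_imp (φ ψ : CNForm Agt Prp) (w : W) :
    M.truth (φ.imp ψ) w ↔ (M.truth φ w → M.truth ψ w) := by
  simp only [CNForm.imp, CNModel.truth]; tauto

lemma truth_K (a : Agt) (φ : CNForm Agt Prp) (w : W) :
    M.truth (CNForm.K a φ) w ↔ ∀ v ∈ cellOf M.N a w, M.truth φ v := by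
  simp only [CNForm.K, CNModel.truth]
  constructor
  · intro h v hv
    by_contra hφ
    have hemp := (N_empty_iff M a w {v | ¬ M.truth φ v}).1
      (fun Y hY => h ⟨Y, hY, fun _ _ => trivial⟩)
    exact absurd hemp (by
      apply Set.nonempty_iff_ne_empty.1
      exact ⟨v, hφ, hv⟩)
  · rintro h ⟨Y, hY, -⟩
    have hemp : {v | ¬ M.truth φ v} ∩ cellOf M.N a w = ∅ := by
      ext v; simp only [Set.mem_inter_iff, Set.mem_setOf_eq, Set.mem_empty_iff_false,
        iff_false, not_and]
      intro hnv hv; exact hnv (h v hv)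
    exact (N_empty_iff M a w _).2 hemp Y hY

lemma truth_boolEval (φ : CNForm Agt Prp) (w : W) :
    boolEval (fun ψ => M.truth ψ w) φ ↔ M.truth φ w := by
  induction φ with
  | top => simp [boolEval, CNModel.truth]
  | atom p => simp [boolEval]
  | neg φ ih => simp only [boolEval, CNModel.truth]; exact not_congr ih
  | and φ ψ ih1 ih2 => simp only [boolEval, CNModel.truth]; exact and_congr ih1 ih2
  | bel a φ ψ => simp [boolEval]

end Aux

/-- Soundness of the CN calculus for conditional neighbourhood models. -/
theorem cn_soundness {Agt Prp : Type} [Finite Agt] (φ : CNForm Agt Prp)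
    (h : CNDeriv φ) :
    ∀ (W : Type) (M : CNModel Agt Prp W) (w : W), M.truth φ w := by
  induction h with
  | @taut φ ht =>
    intro W M w
    exact (truth_boolEval M φ w).1 (ht _)
  | distK a φ ψ =>
    intro W M w
    rw [truth_imp, truth_K, truth_imp, truth_K, truth_K]
    intro h1 h2 v hv
    exact (truth_imp M φ ψ v).1 (h1 v hv) (h2 v hv)
  | tAx a φ =>
    intro W M w
    rw [truth_imp, truth_K]
    intro h1
    exact h1 w (mem_cell_self M.N a w)
  | fiveB a φ ψ =>
    intro W M w
    rw [truth_imp, truth_K]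
    rintro ⟨Y, hY, hsub⟩ v hv
    exact ⟨Y, (cell_eqN M hv _).symm ▸ hY, hsub⟩
  | fourB a φ ψ =>
    intro W M w
    rw [truth_imp, truth_K]
    rintro h1 v hv h2
    rcases h2 with ⟨Y, hY, hsub⟩
    exact h1 ⟨Y, (cell_eqN M hv _) ▸ hY, hsub⟩
  | dAx a φ ψ =>
    intro W M w
    rw [truth_imp]
    rintro ⟨Y, hY, hsub⟩ ⟨Y', hY', hsub'⟩
    set X := {v | M.truth φ v}
    set c := cellOf M.N a w
    have hYc := M.cond_c a w X Y hY
    have hY'c := M.cond_c a w X Y' hY'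
    have hdisj : Y' ⊆ (X ∩ c) \ Y := by
      intro v hv
      refine ⟨hY'c hv, fun hvY => ?_⟩
      exact (hsub' hv) (hsub hvY)
    have : (X ∩ c) \ Y ∈ M.N a w X :=
      N_mono M hY' hdisj (Set.diff_subset)
    exact M.cond_d a w X Y hY this
  | ecAx a φ ψ χ =>
    intro W M w
    rw [truth_imp, truth_K, truth_imp]
    rintro h1 ⟨Y, hY, hsub⟩
    have heq : {v | M.truth φ v} ∩ cellOf M.N a w
        = {v | M.truth ψ v} ∩ cellOf M.N a w := by
      ext v
      simp only [Set.mem_inter_iff, Set.mem_setOf_eq, and_congr_left_iff]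
      intro hv
      have := h1 v hv
      simp only [CNForm.iff, CNForm.imp, CNModel.truth] at this
      tauto
    exact ⟨Y, (M.cond_ec a w _ _ heq) ▸ hY, hsub⟩
  | mAx a φ ψ χ =>
    intro W M w
    rw [truth_imp, truth_K, truth_imp]
    rintro h1 ⟨Y, hY, hsub⟩
    refine ⟨Y, hY, fun v hv => ?_⟩
    have hvc := M.cond_c a w _ Y hY hv
    exact (truth_imp M φ ψ v).1 (h1 v hvc.2) (hsub hv)
  | cAx a φ ψ =>
    intro W M w
    rw [truth_imp]
    rintro ⟨Y, hY, hsub⟩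
    refine ⟨Y, hY, fun v hv => ?_⟩
    exact ⟨(M.cond_c a w _ Y hY hv).1, hsub hv⟩
  | scAx a φ ψ χ =>
    intro W M w
    rw [truth_imp]
    intro hcon
    have h1 : ¬ M.truth (.bel a χ (.neg φ)) w := hcon.1
    have h2 : ¬ M.truth (CNForm.K a (.neg (χ.and ((CNForm.neg φ).and ψ)))) w := hcon.2
    simp only [CNModel.truth] at h1
    rw [truth_K] at h2
    push_neg at h2
    obtain ⟨v, hvc, hv⟩ := h2
    simp only [CNModel.truth, not_not] at hv
    obtain ⟨hvχ, hvnφ, hvψ⟩ := hv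
    set X := {u | M.truth χ u}
    set c := cellOf M.N a w
    set Y := (X ∩ c) ∩ {u | M.truth φ u}
    set Z := (X ∩ c) ∩ {u | M.truth (φ.or ψ) u}
    have hdiff : (X ∩ c) \ Y ∉ M.N a w X := by
      intro hmem
      exact h1 ⟨(X ∩ c) \ Y, hmem, fun u hu huφ => hu.2 ⟨hu.1, huφ⟩⟩
    have hYZ : Y ⊂ Z := by
      constructor
      · intro u hu
        refine ⟨hu.1, ?_⟩
        exact fun h => h.1 hu.2
      · intro hZY
        have hvZ : v ∈ Z := by
          refine ⟨⟨hvχ, hvc⟩, ?_⟩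
          exact fun h => h.2 hvψ
        exact hvnφ (hZY hvZ).2
    refine ⟨Z, M.cond_sc a w X Y Z Set.inter_subset_left Set.inter_subset_left
      hdiff hYZ, fun u hu => hu.2⟩
  | @mp φ ψ h1 h2 ih1 ih2 =>
    intro W M w
    exact (truth_imp M φ ψ w).1 (ih1 W M w) (ih2 W M w)
  | @necK φ a h1 ih =>
    intro W M w
    rw [truth_K]
    intro v _
    exact ih W M v
end

section
/- Closure of conditional neighbourhood models under link-cutting update: let M = (W, N, V) be a conditional neighbourhood model and A ⊆ W. Define, for each agent a and w ∈ W, [w]^A_a := [w]_a ∩ A if w ∈ A and [w]^A_a := [w]_a \ A if w ∉ A, and define N'_a^w(X) := N_a^w(X ∩ [w]^A_a) for all X ⊆ W. Then M' = (W, N', V) is again a conditional neighbourhood model, and its derived equivalence classes satisfy {v ∈ W | ∀ X ⊆ W, N'_a^w(X) = N'_a^v(X)} = [w]^A_a for every agent a and w ∈ W. -/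
lemma cell_refl {Agt W : Type} (N : Agt → W → Set W → Set (Set W)) (a : Agt) (w : W) :
    w ∈ cellOf N a w := fun _ => rfl

lemma cell_eq_of_mem {Agt W : Type} (N : Agt → W → Set W → Set (Set W)) (a : Agt) (w v : W)
    (h : v ∈ cellOf N a w) : cellOf N a w = cellOf N a v := by
  ext u
  constructor <;> intro hu X
  · rw [← h X]; exact hu X
  · rw [h X]; exact hu X

lemma top_mem {Agt Prp W : Type} (M : CNModel Agt Prp W) (a : Agt) (w : W) (X : Set W)
    (h : (X ∩ cellOf M.N a w).Nonempty) : X ∩ cellOf M.N a w ∈ M.N a w X := by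
  by_contra hc
  exact hc (M.cond_sc a w X ∅ (X ∩ cellOf M.N a w) (by simp) (subset_refl _)
    (by simpa using hc) (Set.empty_ssubset.2 h))

open Classical in
/-- Closure of conditional neighbourhood models under link-cutting update by a
set `A` of worlds: with `[w]^A_a := [w]_a ∩ A` if `w ∈ A` and `[w]_a \ A`
otherwise, the update `N'_a^w(X) := N_a^w(X ∩ [w]^A_a)` yields again a
conditional neighbourhood model, whose derived cells are exactly the `[w]^A_a`. -/
theorem cn_link_cut_closed {Agt Prp W : Type} (M : CNModel Agt Prp W) (A : Set W) :
    ∃ M' : CNModel Agt Prp W,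
      M'.N = (fun a w X =>
        M.N a w (X ∩ (if w ∈ A then cellOf M.N a w ∩ A else cellOf M.N a w \ A))) ∧
      M'.V = M.V ∧
      ∀ (a : Agt) (w : W),
        cellOf M'.N a w = (if w ∈ A then cellOf M.N a w ∩ A else cellOf M.N a w \ A) := by
  classical
  set C : Agt → W → Set W :=
    fun a w => if w ∈ A then cellOf M.N a w ∩ A else cellOf M.N a w \ A with hC
  have hCsub : ∀ a w, C a w ⊆ cellOf M.N a w := by
    intro a w
    simp only [hC]
    split_ifs
    · exact Set.inter_subset_left
    · exact Set.diff_subset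
  have hwC : ∀ a w, w ∈ C a w := by
    intro a w
    simp only [hC]
    split_ifs with h
    · exact ⟨cell_refl M.N a w, h⟩
    · exact ⟨cell_refl M.N a w, h⟩
  have hCeq : ∀ a w v, v ∈ C a w → C a v = C a w := by
    intro a w v hv
    have hvcell : v ∈ cellOf M.N a w := hCsub a w hv
    have hcell : cellOf M.N a v = cellOf M.N a w := (cell_eq_of_mem M.N a w v hvcell).symm
    simp only [hC]
    by_cases hw : w ∈ A
    · have hvA : v ∈ A := by
        simp only [hC] at hv; rw [if_pos hw] at hv; exact hv.2
      rw [if_pos hw, if_pos hvA, hcell]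
    · have hvA : v ∉ A := by
        simp only [hC] at hv; rw [if_neg hw] at hv; exact hv.2
      rw [if_neg hw, if_neg hvA, hcell]
  set N' : Agt → W → Set W → Set (Set W) := fun a w X => M.N a w (X ∩ C a w) with hN'
  have hinter : ∀ a w (X : Set W), (X ∩ C a w) ∩ cellOf M.N a w = X ∩ C a w := by
    intro a w X
    rw [Set.inter_assoc, Set.inter_eq_self_of_subset_left (hCsub a w)]
  -- the new cells
  have hcell' : ∀ a w, cellOf N' a w = C a w := by
    intro a w
    ext v
    constructor
    · intro hv
      have hW := hv Set.univ
      simp only [hN', Set.univ_inter] at hW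
      have hCw : (C a w).Nonempty := ⟨w, hwC a w⟩
      have h1 : C a w ∈ M.N a w (C a w) := by
        have := top_mem M a w (C a w)
          (by rw [Set.inter_eq_self_of_subset_left (hCsub a w)]; exact hCw)
        rwa [Set.inter_eq_self_of_subset_left (hCsub a w)] at this
      rw [hW] at h1
      have h2 : C a w ⊆ C a v :=
        (M.cond_c a v (C a v) _ h1).trans Set.inter_subset_left
      have h3 : C a v ∈ M.N a v (C a v) := by
        have := top_mem M a v (C a v)
          (by rw [Set.inter_eq_self_of_subset_left (hCsub a v)]; exact ⟨w, h2 (hwC a w)⟩)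
        rwa [Set.inter_eq_self_of_subset_left (hCsub a v)] at this
      rw [← hW] at h3
      have h4 : C a v ⊆ C a w :=
        (M.cond_c a w (C a w) _ h3).trans Set.inter_subset_left
      exact h4 (hwC a v)
    · intro hv X
      have hcc : C a v = C a w := hCeq a w v hv
      have hNeq : ∀ Y, M.N a w Y = M.N a v Y := hCsub a w hv
      simp only [hN', hcc, hNeq]
  refine ⟨⟨M.nonempty, N', M.V, ?_, ?_, ?_, ?_⟩, rfl, rfl, fun a w => hcell' a w⟩
  · intro a w X Y hY
    have := M.cond_c a w (X ∩ C a w) Y hY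
    rw [hinter] at this
    rw [hcell' a w]
    exact this
  · intro a w X Y hXY
    rw [hcell' a w] at hXY
    show M.N a w (X ∩ C a w) = M.N a w (Y ∩ C a w)
    rw [hXY]
  · intro a w X Y hY
    have := M.cond_d a w (X ∩ C a w) Y hY
    rw [hinter] at this
    rw [hcell' a w]
    exact this
  · intro a w X Y Z hYsub hZsub hnot hYZ
    rw [hcell' a w] at hYsub hZsub hnot
    exact M.cond_sc a w (X ∩ C a w) Y Z (by rw [hinter]; exact hYsub)
      (by rw [hinter]; exact hZsub) (by rw [hinter]; exact hnot) hYZ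
end

section
/- Soundness of the public announcement reduction axiom: for every conditional neighbourhood model M, world w, agent a, and formulas φ, ψ, χ of L_PC, the equivalence [φ]B_a(ψ,χ) ↔ (φ → B_a(φ∧[φ]ψ, [φ]χ)) is true at w. -/
/-- The language L_PC: `φ ::= ⊤ | p | ¬φ | (φ∧φ) | B_a(φ,φ) | [φ]φ`. -/
inductive PCForm (Agt Prp : Type) : Type
  | top : PCForm Agt Prp
  | atom : Prp → PCForm Agt Prp
  | neg : PCForm Agt Prp → PCForm Agt Prp
  | and : PCForm Agt Prp → PCForm Agt Prp → PCForm Agt Prp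
  | bel : Agt → PCForm Agt Prp → PCForm Agt Prp → PCForm Agt Prp
  | ann : PCForm Agt Prp → PCForm Agt Prp → PCForm Agt Prp

/-- Material implication in L_PC. -/
def PCForm.imp {Agt Prp : Type} (φ ψ : PCForm Agt Prp) : PCForm Agt Prp :=
  .neg (.and φ (.neg ψ))

/-- Truth of an L_PC formula, relative to a restriction set `R ⊆ W` recording
the worlds surviving the announcements made so far (so truth in `M` itself is
truth relative to `R = univ`, and the updated model `M^φ` is represented by
restricting to `R ∩ ⟦φ⟧`).  In the restricted model the worlds are `R`, the
valuation is `V ∩ R`, the cells are `[w]_a ∩ R`, and the neighbourhood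
function is unchanged, so `B_a(φ,ψ)` holds at `w` iff some
`Y ∈ N_a^w(⟦φ⟧_{M^R})` satisfies `Y ⊆ ⟦ψ⟧_{M^R}`, where `⟦χ⟧_{M^R} = {v ∈ R | χ}`. -/
def pctruth {Agt Prp W : Type} (M : CNModel Agt Prp W) :
    PCForm Agt Prp → Set W → W → Prop
  | .top, _, _ => True
  | .atom p, _, w => w ∈ M.V p
  | .neg φ, R, w => ¬ pctruth M φ R w
  | .and φ ψ, R, w => pctruth M φ R w ∧ pctruth M ψ R w
  | .bel a φ ψ, R, w =>
      ∃ Y ∈ M.N a w {v ∈ R | pctruth M φ R v}, Y ⊆ {v ∈ R | pctruth M ψ R v}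
  | .ann φ ψ, R, w =>
      pctruth M φ R w → pctruth M ψ {v ∈ R | pctruth M φ R v} w

/-- Soundness of the public announcement (deleting points) reduction axiom:
`[φ]B_a(ψ,χ) ↔ (φ → B_a(φ∧[φ]ψ, [φ]χ))` is true at every world of every
conditional neighbourhood model. -/
theorem pc_reduction_sound {Agt Prp W : Type} (M : CNModel Agt Prp W) (w : W)
    (a : Agt) (φ ψ χ : PCForm Agt Prp) :
    pctruth M (.ann φ (.bel a ψ χ)) Set.univ w ↔
      pctruth M (PCForm.imp φ (.bel a (.and φ (.ann φ ψ)) (.ann φ χ))) Set.univ w := by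
  classical
  simp only [pctruth, PCForm.imp, not_and, not_not]
  set A : Set W := {v ∈ (Set.univ : Set W) | pctruth M φ Set.univ v} with hA
  have hsets : {v ∈ A | pctruth M ψ A v}
      = {v ∈ (Set.univ : Set W) |
          pctruth M φ Set.univ v ∧
            (pctruth M φ Set.univ v → pctruth M ψ A v)} := by
    ext v
    simp [hA, Set.mem_sep_iff]
    tauto
  constructor
  · intro h hφ
    obtain ⟨Y, hY, hYsub⟩ := h hφ
    refine ⟨Y, by rwa [hsets] at hY, ?_⟩
    intro v hv
    have hvA : v ∈ A := ((M.cond_c a w _ Y hY hv).1).1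
    simp only [Set.mem_sep_iff]
    exact ⟨trivial, fun _ => (hYsub hv).2⟩
  · intro h hφ
    obtain ⟨Y, hY, hYsub⟩ := h hφ
    rw [← hsets] at hY
    refine ⟨Y, hY, ?_⟩
    intro v hv
    have hvA : v ∈ A := (M.cond_c a w _ Y hY hv).1.1
    exact ⟨hvA, (hYsub hv).2 hvA.2⟩
end

section
/- Soundness of the truth-value announcement reduction axiom: for every conditional neighbourhood model M, world w, agent a, and formulas φ, ψ, χ of L_PC±, the equivalence [±φ]B_a(ψ,χ) ↔ ((φ → B_a(φ∧[±φ]ψ, [±φ]χ)) ∧ (¬φ → B_a(¬φ∧[±φ]ψ, [±φ]χ))) is true at w. -/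
/-- The language L_PC±: `φ ::= ⊤ | p | ¬φ | (φ∧φ) | B_a(φ,φ) | [±φ]φ`. -/
inductive PMForm (Agt Prp : Type) : Type
  | top : PMForm Agt Prp
  | atom : Prp → PMForm Agt Prp
  | neg : PMForm Agt Prp → PMForm Agt Prp
  | and : PMForm Agt Prp → PMForm Agt Prp → PMForm Agt Prp
  | bel : Agt → PMForm Agt Prp → PMForm Agt Prp → PMForm Agt Prp
  | ann : PMForm Agt Prp → PMForm Agt Prp → PMForm Agt Prp

/-- Material implication in L_PC±. -/
def PMForm.imp {Agt Prp : Type} (φ ψ : PMForm Agt Prp) : PMForm Agt Prp :=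
  .neg (.and φ (.neg ψ))

/-- Truth of an L_PC± formula with respect to a neighbourhood function `N` and
a valuation `V`.  The truth-value announcement `[±φ]ψ` is evaluated in the
updated model `(W, N^{±φ}, V)`, where `N^{±φ}_a^u(X) := N_a^u(X ∩ [u]^{±φ}_a)`
and `[u]^{±φ}_a := {v ∈ [u]_a | v ⊨ φ iff u ⊨ φ}` (i.e. `[u]_a ∩ ⟦φ⟧` if
`u ⊨ φ`, and `[u]_a \ ⟦φ⟧` otherwise). -/
def pmtruth {Agt Prp W : Type} :
    (Agt → W → Set W → Set (Set W)) → (Prp → Set W) → PMForm Agt Prp → W → Prop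
  | _, _, .top, _ => True
  | _, V, .atom p, w => w ∈ V p
  | N, V, .neg φ, w => ¬ pmtruth N V φ w
  | N, V, .and φ ψ, w => pmtruth N V φ w ∧ pmtruth N V ψ w
  | N, V, .bel a φ ψ, w =>
      ∃ Y ∈ N a w {v | pmtruth N V φ v}, Y ⊆ {v | pmtruth N V ψ v}
  | N, V, .ann φ ψ, w =>
      pmtruth
        (fun a u X =>
          N a u (X ∩ {v | v ∈ cellOf N a u ∧ (pmtruth N V φ v ↔ pmtruth N V φ u)}))
        V ψ w
  termination_by _ _ φ _ => sizeOf φ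

/-- Soundness of the truth-value announcement reduction axiom:
`[±φ]B_a(ψ,χ) ↔ ((φ → B_a(φ∧[±φ]ψ, [±φ]χ)) ∧ (¬φ → B_a(¬φ∧[±φ]ψ, [±φ]χ)))`
is true at every world of every conditional neighbourhood model. -/
theorem pm_reduction_sound {Agt Prp W : Type} (M : CNModel Agt Prp W) (w : W)
    (a : Agt) (φ ψ χ : PMForm Agt Prp) :
    pmtruth M.N M.V (.ann φ (.bel a ψ χ)) w ↔
      pmtruth M.N M.V
        (PMForm.and
          (PMForm.imp φ (.bel a (.and φ (.ann φ ψ)) (.ann φ χ)))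
          (PMForm.imp (.neg φ) (.bel a (.and (.neg φ) (.ann φ ψ)) (.ann φ χ)))) w := by
  classical
  simp only [pmtruth, PMForm.imp]
  set N' := (fun a u X =>
      M.N a u (X ∩ {v | v ∈ cellOf M.N a u ∧ (pmtruth M.N M.V φ v ↔ pmtruth M.N M.V φ u)}))
    with hN'
  have key : ∀ A : Set W,
      M.N a w (A ∩ {v | v ∈ cellOf M.N a w ∧ (pmtruth M.N M.V φ v ↔ pmtruth M.N M.V φ w)})
        = M.N a w {v | (pmtruth M.N M.V φ v ↔ pmtruth M.N M.V φ w) ∧ v ∈ A} := by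
    intro A
    apply M.cond_ec
    ext v
    simp only [Set.mem_inter_iff, Set.mem_setOf_eq]
    tauto
  by_cases hφ : pmtruth M.N M.V φ w
  · constructor
    · rintro ⟨Y, hY, hYχ⟩
      have hB : ∃ Y ∈ M.N a w {v | pmtruth M.N M.V φ v ∧ pmtruth N' M.V ψ v},
          Y ⊆ {v | pmtruth N' M.V χ v} := by
        refine ⟨Y, ?_, hYχ⟩
        rw [key {v | pmtruth N' M.V ψ v}] at hY
        convert hY using 2
        ext v; simp only [Set.mem_setOf_eq]; tauto
      exact ⟨fun h => h.2 hB, fun h => h.1 hφ⟩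
    · rintro ⟨h1, _⟩
      rcases not_and.mp h1 hφ |> not_not.mp with ⟨Y, hY, hYχ⟩
      refine ⟨Y, ?_, hYχ⟩
      rw [key {v | pmtruth N' M.V ψ v}]
      convert hY using 2
      ext v; simp only [Set.mem_setOf_eq]; tauto
  · constructor
    · rintro ⟨Y, hY, hYχ⟩
      have hB : ∃ Y ∈ M.N a w {v | ¬ pmtruth M.N M.V φ v ∧ pmtruth N' M.V ψ v},
          Y ⊆ {v | pmtruth N' M.V χ v} := by
        refine ⟨Y, ?_, hYχ⟩
        rw [key {v | pmtruth N' M.V ψ v}] at hY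
        convert hY using 2
        ext v; simp only [Set.mem_setOf_eq]; tauto
      exact ⟨fun h => absurd h.1 hφ, fun h => h.2 hB⟩
    · rintro ⟨_, h2⟩
      rcases not_and.mp h2 hφ |> not_not.mp with ⟨Y, hY, hYχ⟩
      refine ⟨Y, ?_, hYχ⟩
      rw [key {v | pmtruth N' M.V ψ v}]
      convert hY using 2
      ext v; simp only [Set.mem_setOf_eq]; tauto
end

section
/- L_QP is strictly more expressive than L_CN on comparison models: let W = 𝒫({p,q}), V(r) := {w ∈ W | r ∈ w} for r ∈ {p,q}, and let N1 = (W, ⪰_1, V) and N2 = (W, ⪰_2, V) be the comparison models with ⪰_1 = {({{p},{p,q}}, {{q},{p,q}}), ({{p}},{{q}})} and ⪰_2 = {({{p}},{{q}})}. Then (i) for every L_CN formula φ and every w ∈ W, N1,w ⊨_1 φ iff N2,w ⊨_1 φ; and (ii) the L_QP formula p ≽ q is true at every world of N1 under ⊨_2 but false at every world of N2 under ⊨_2. -/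
/-- The single-agent language L_CN: `φ ::= ⊤ | p | ¬φ | (φ∧φ) | B(φ,φ)`,
with proposition letters `p, q` rendered as `0, 1 : Fin 2`. -/
inductive CForm : Type
  | top : CForm
  | atom : Fin 2 → CForm
  | neg : CForm → CForm
  | and : CForm → CForm → CForm
  | bel : CForm → CForm → CForm

/-- The single-agent language L_QP: `φ ::= ⊤ | p | ¬φ | (φ∧φ) | φ ≽ φ`. -/
inductive QForm : Type
  | top : QForm
  | atom : Fin 2 → QForm
  | neg : QForm → QForm
  | and : QForm → QForm → QForm
  | ge : QForm → QForm → QForm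

/-- The worlds of the comparison models: `W = 𝒫({p,q})`. -/
abbrev Wld : Type := Set (Fin 2)

/-- The `⊨_1` semantics of L_CN on a comparison model `(W, ⪰, V)`:
`B(α,β)` holds iff `⟦α∧β⟧ ⪰ ⟦α∧¬β⟧`. -/
def ctruth (ge : Set Wld → Set Wld → Prop) (V : Fin 2 → Set Wld) : CForm → Wld → Prop
  | .top, _ => True
  | .atom p, w => w ∈ V p
  | .neg φ, w => ¬ ctruth ge V φ w
  | .and φ ψ, w => ctruth ge V φ w ∧ ctruth ge V ψ w
  | .bel φ ψ, _ =>
      ge {v | ctruth ge V φ v ∧ ctruth ge V ψ v} {v | ctruth ge V φ v ∧ ¬ ctruth ge V ψ v}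

/-- The `⊨_2` semantics of L_QP on a comparison model `(W, ⪰, V)`:
`α ≽ β` holds iff `⟦α⟧ ⪰ ⟦β⟧`. -/
def qtruth (ge : Set Wld → Set Wld → Prop) (V : Fin 2 → Set Wld) : QForm → Wld → Prop
  | .top, _ => True
  | .atom p, w => w ∈ V p
  | .neg φ, w => ¬ qtruth ge V φ w
  | .and φ ψ, w => qtruth ge V φ w ∧ qtruth ge V ψ w
  | .ge α β, _ => ge {v | qtruth ge V α v} {v | qtruth ge V β v}

/-- The valuation: `V(r) = {w ∈ W | r ∈ w}`. -/
def V18 : Fin 2 → Set Wld := fun r => {w | r ∈ w}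

/-- `⪰_1` relates `{{p},{p,q}} ⪰ {{q},{p,q}}` (i.e. `⟦p⟧ ⪰ ⟦q⟧`) and `{{p}} ⪰ {{q}}`. -/
def ge1 : Set Wld → Set Wld → Prop := fun A B =>
  (A = {w | (0 : Fin 2) ∈ w} ∧ B = {w | (1 : Fin 2) ∈ w}) ∨
  (A = {({0} : Wld)} ∧ B = {({1} : Wld)})

/-- `⪰_2` relates only `{{p}} ⪰ {{q}}`. -/
def ge2 : Set Wld → Set Wld → Prop := fun A B =>
  A = {({0} : Wld)} ∧ B = {({1} : Wld)}

lemma ge_iff_of_disjoint (A B : Set Wld) (h : ∀ w, ¬(w ∈ A ∧ w ∈ B)) :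
    ge1 A B ↔ ge2 A B := by
  constructor
  · rintro (⟨hA, hB⟩ | h2)
    · exact absurd ⟨by simp [hA], by simp [hB]⟩ (h ({0, 1} : Wld))
    · exact h2
  · exact fun h2 => Or.inr h2

lemma ctruth_iff : ∀ (φ : CForm) (w : Wld), ctruth ge1 V18 φ w ↔ ctruth ge2 V18 φ w := by
  intro φ
  induction φ with
  | top => intro w; simp [ctruth]
  | atom p => intro w; simp [ctruth]
  | neg φ ih => intro w; simp [ctruth, ih w]
  | and φ ψ ih1 ih2 => intro w; simp [ctruth, ih1 w, ih2 w]
  | bel φ ψ ih1 ih2 =>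
    intro w
    have hA : {v | ctruth ge1 V18 φ v ∧ ctruth ge1 V18 ψ v}
        = {v | ctruth ge2 V18 φ v ∧ ctruth ge2 V18 ψ v} := by
      ext v; simp [ih1 v, ih2 v]
    have hB : {v | ctruth ge1 V18 φ v ∧ ¬ ctruth ge1 V18 ψ v}
        = {v | ctruth ge2 V18 φ v ∧ ¬ ctruth ge2 V18 ψ v} := by
      ext v; simp [ih1 v, ih2 v]
    show ge1 _ _ ↔ ge2 _ _
    rw [hA, hB]
    apply ge_iff_of_disjoint
    rintro v ⟨⟨_, h1⟩, ⟨_, h2⟩⟩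
    exact h2 h1

/-- L_QP is strictly more expressive than L_CN on comparison models:
the comparison models `N1 = (W, ⪰_1, V)` and `N2 = (W, ⪰_2, V)` satisfy the
same L_CN formulas at every world, but the L_QP formula `p ≽ q` is true
everywhere on `N1` and false everywhere on `N2`. -/
theorem qp_more_expressive_than_cn :
    (∀ (φ : CForm) (w : Wld), ctruth ge1 V18 φ w ↔ ctruth ge2 V18 φ w) ∧
    (∀ w : Wld, qtruth ge1 V18 (.ge (.atom 0) (.atom 1)) w) ∧
    (∀ w : Wld, ¬ qtruth ge2 V18 (.ge (.atom 0) (.atom 1)) w) := by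
  refine ⟨ctruth_iff, fun w => ?_, fun w => ?_⟩
  · show ge1 _ _
    left
    constructor <;> rfl
  · show ¬ ge2 _ _
    rintro ⟨hA, _⟩
    have h : ({0, 1} : Wld) ∈ {v | qtruth ge2 V18 (.atom 0) v} := by
      simp [qtruth, V18]
    rw [hA] at h
    have : (1 : Fin 2) ∈ ({0, 1} : Wld) := by simp
    rw [h] at this
    simp at this
end
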